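/- There is no constant C > 0 such that ‖q − q_k‖_{L²(Γ₁)} ≤ C ‖u − u_k‖_{L²(Γ₂)} for all k ≥ 1, where q, q_k, u, u_k are as in the annulus counterexample. Hence Lipschitz stability fails for recovering the Robin coefficient from Dirichlet boundary data in this setting. -/

import Mathlib

open Real

/-- The difference `q - q_k` of the Robin coefficients, as a function of the
angle `θ` on the inner circle `Γ₁ = {|x| = 1/2}`. -/
noncomputable def qDiff (k : ℕ) (θ : ℝ) : ℝ :=
  2 / (1 - Real.log 2) -
    (2 + (k:ℝ)⁻¹ * (2 * ((2:ℝ) ^ (2 * k))⁻¹ - 2) * Real.cos (k * θ)) /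
      (1 - Real.log 2 + ((k:ℝ) ^ 2)⁻¹ * (((2:ℝ) ^ (2 * k))⁻¹ + 1) * Real.cos (k * θ))

/-- The difference `u - u_k` of the solutions, restricted to the outer
circle `Γ₂ = {|x| = 1}`, as a function of the angle `θ`. -/
noncomputable def uDiff (k : ℕ) (θ : ℝ) : ℝ :=
  -(((2:ℝ) ^ k)⁻¹ * ((k:ℝ) ^ 2)⁻¹ * 2 * Real.cos (k * θ))

lemma integral_cos_k_sq (k : ℕ) (hk : 1 ≤ k) :
    ∫ θ in (0:ℝ)..(2*π), Real.cos (k*θ)^2 = π := by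
  have hk0 : (k:ℝ) ≠ 0 := Nat.cast_ne_zero.2 (by omega)
  rw [intervalIntegral.integral_comp_mul_left (fun x => Real.cos x ^ 2) hk0]
  have h2 : (k:ℝ) * (2*π) = (2*k : ℕ) * π := by push_cast; ring
  rw [integral_cos_sq, mul_zero, h2, Real.sin_nat_mul_pi]
  simp [h2]
  field_simp

set_option maxHeartbeats 1000000 in
lemma qDiff_lb (k : ℕ) (hk : 2 ≤ k) :
    Real.sqrt π / (2*(k:ℝ)) ≤ Real.sqrt (∫ θ in (0:ℝ)..(2 * π), (qDiff k θ) ^ 2) := by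
  have hk1 : 1 ≤ k := by omega
  set D : ℝ := 1 - Real.log 2 with hDdef
  set d : ℝ := ((k:ℝ) ^ 2)⁻¹ * (((2:ℝ) ^ (2 * k))⁻¹ + 1) with hddef
  set b : ℝ := (k:ℝ)⁻¹ * (2 * ((2:ℝ) ^ (2 * k))⁻¹ - 2) with hbdef
  set e : ℝ := 2 / D * d - b with hedef
  have hkR : (2:ℝ) ≤ (k:ℝ) := by exact_mod_cast hk
  have h4 : (0:ℝ) < (k:ℝ) := by linarith
  have hD : (0.3:ℝ) < D := by
    have := Real.log_two_lt_d9
    rw [hDdef]; linarith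
  have hk2 : (4:ℝ) ≤ (k:ℝ)^2 := by nlinarith
  have hp16 : (16:ℝ) ≤ (2:ℝ)^(2*k) := by
    calc (16:ℝ) = 2^4 := by norm_num
    _ ≤ 2^(2*k) := by apply pow_le_pow_right₀ (by norm_num); omega
  have hd_pos : 0 < d := by rw [hddef]; positivity
  have h2 : ((2:ℝ)^(2*k))⁻¹ ≤ 1/16 := by
    rw [inv_le_comm₀ (by positivity) (by norm_num)]; linarith
  have hd_le : d ≤ 17/64 := by
    rw [hddef]
    have h1 : ((k:ℝ)^2)⁻¹ ≤ 1/4 := by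
      rw [inv_le_comm₀ (by positivity) (by norm_num)]; linarith
    nlinarith [inv_nonneg.2 (le_of_lt (show (0:ℝ) < (k:ℝ)^2 by positivity))]
  have hden : ∀ θ : ℝ, 0 < D + d * Real.cos (k*θ) := by
    intro θ
    nlinarith [Real.neg_one_le_cos (k*θ), Real.cos_le_one (k*θ)]
  have hq_eq : ∀ θ : ℝ, qDiff k θ = e * Real.cos (k*θ) / (D + d * Real.cos (k*θ)) := by
    intro θ
    rw [qDiff, ← hDdef, ← hddef, ← hbdef, hedef]
    have h1 : D ≠ 0 := by linarith
    have h2' : D + d * Real.cos (k*θ) ≠ 0 := (hden θ).ne'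
    rw [eq_div_iff h2']
    have e1 : 2 / D * D = 2 := div_mul_cancel₀ _ h1
    have e2 : (2 + b * Real.cos (k*θ)) / (D + d * Real.cos (k*θ)) * (D + d * Real.cos (k*θ))
        = 2 + b * Real.cos (k*θ) := div_mul_cancel₀ _ h2'
    linear_combination e1 - e2
  have he : 1/(k:ℝ) ≤ e := by
    rw [hedef, hbdef]
    have h3 : 0 ≤ 2 / D * d := by positivity
    have h5 : (k:ℝ)⁻¹ * (2 * ((2:ℝ)^(2*k))⁻¹ - 2) ≤ -(1/(k:ℝ)) := by
      rw [one_div]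
      nlinarith [inv_pos.2 h4]
    linarith
  have he_pos : 0 < e := lt_of_lt_of_le (by positivity) he
  -- pointwise bound
  have hpt : ∀ θ ∈ Set.Icc (0:ℝ) (2*π),
      e^2/4 * Real.cos (k*θ)^2 ≤ (qDiff k θ)^2 := by
    intro θ _
    rw [hq_eq θ, div_pow, mul_pow]
    have hd2 : 0 < (D + d * Real.cos (k*θ))^2 := pow_pos (hden θ) 2
    have hD1 : D < 1 := by
      have := Real.log_pos (by norm_num : (1:ℝ) < 2)
      rw [hDdef]; linarith
    have ht1 : D + d * Real.cos (k*θ) ≤ 2 := by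
      nlinarith [Real.cos_le_one (k*θ)]
    have hd4 : (D + d * Real.cos (k*θ))^2 ≤ 4 := by
      nlinarith [hden θ, ht1]
    have hnum : 0 ≤ e^2 * Real.cos (k*θ)^2 := by positivity
    calc e^2/4 * Real.cos (k*θ)^2 = e^2 * Real.cos (k*θ)^2 / 4 := by ring
    _ ≤ e^2 * Real.cos (k*θ)^2 / (D + d * Real.cos (k*θ))^2 :=
        div_le_div_of_nonneg_left hnum hd2 hd4
  -- integrability
  have hc1 : Continuous fun θ => e^2/4 * Real.cos (k*θ)^2 := by fun_prop
  have hc2 : Continuous fun θ => (qDiff k θ)^2 := by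
    have : Continuous fun θ => qDiff k θ := by
      simp only [hq_eq]
      exact Continuous.div (by fun_prop) (by fun_prop) (fun θ => (hden θ).ne')
    fun_prop
  have hint := intervalIntegral.integral_mono_on (μ := MeasureTheory.volume) (by positivity : (0:ℝ) ≤ 2*π)
    (hc1.intervalIntegrable 0 (2*π)) (hc2.intervalIntegrable 0 (2*π)) hpt
  have hval : (∫ θ in (0:ℝ)..(2*π), e^2/4 * Real.cos (k*θ)^2) = e^2/4 * π := by
    rw [intervalIntegral.integral_const_mul, integral_cos_k_sq k hk1]
  rw [hval] at hint
  have : Real.sqrt (e^2/4 * π) ≤ Real.sqrt (∫ θ in (0:ℝ)..(2*π), (qDiff k θ)^2) :=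
    Real.sqrt_le_sqrt hint
  refine le_trans ?_ this
  rw [show e^2/4*π = (e/2)^2 * π by ring, Real.sqrt_mul (by positivity),
    Real.sqrt_sq (by positivity)]
  have hhalf : 1/(2*(k:ℝ)) ≤ e/2 := by
    calc 1/(2*(k:ℝ)) = (1/(k:ℝ))/2 := by ring
    _ ≤ e/2 := by linarith
  have hsp : 0 ≤ Real.sqrt π := Real.sqrt_nonneg π
  calc Real.sqrt π / (2*(k:ℝ)) = 1/(2*(k:ℝ)) * Real.sqrt π := by ring
  _ ≤ e/2 * Real.sqrt π := by nlinarith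

lemma uDiff_val (k : ℕ) (hk : 1 ≤ k) :
    Real.sqrt (∫ θ in (0:ℝ)..(2 * π), (uDiff k θ) ^ 2)
      = ((2:ℝ)^k)⁻¹ * ((k:ℝ)^2)⁻¹ * 2 * Real.sqrt π := by
  have hc : ∀ θ : ℝ, (uDiff k θ)^2
      = (((2:ℝ)^k)⁻¹ * ((k:ℝ)^2)⁻¹ * 2)^2 * Real.cos (k*θ)^2 := by
    intro θ; rw [uDiff]; ring
  simp_rw [hc]
  rw [intervalIntegral.integral_const_mul, integral_cos_k_sq k hk]
  have hkpos : (0:ℝ) < (k:ℝ) := by exact_mod_cast Nat.lt_of_lt_of_le Nat.zero_lt_one hk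
  rw [Real.sqrt_mul (by positivity), Real.sqrt_sq (by positivity)]

/-- There is no constant `C > 0` with
`‖q - q_k‖_{L²(Γ₁)} ≤ C ‖u - u_k‖_{L²(Γ₂)}` for all `k ≥ 1`:
Lipschitz stability fails for recovering the Robin coefficient from
Dirichlet boundary data in the annulus counterexample. -/
theorem stmt10 :
    ¬ ∃ C : ℝ, 0 < C ∧ ∀ k : ℕ, 1 ≤ k →
      Real.sqrt (∫ θ in (0:ℝ)..(2 * π), (qDiff k θ) ^ 2)
        ≤ C * Real.sqrt (∫ θ in (0:ℝ)..(2 * π), (uDiff k θ) ^ 2) := by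
  rintro ⟨C, hC, h⟩
  set k : ℕ := ⌈8*C⌉₊ + 2 with hkdef
  have hk2 : 2 ≤ k := by omega
  have hk1 : 1 ≤ k := by omega
  have hkC : 8*C < (k:ℝ) := by
    have h1 : ((⌈8*C⌉₊:ℕ):ℝ) < (k:ℝ) := by
      exact_mod_cast Nat.lt_succ_of_lt (Nat.lt_succ_self _)
    linarith [Nat.le_ceil (8*C)]
  have hkpos : (0:ℝ) < (k:ℝ) := by linarith
  have h1 := qDiff_lb k hk2
  have h2 := h k hk1
  rw [uDiff_val k hk1] at h2
  have hsp : 0 < Real.sqrt π := Real.sqrt_pos.2 Real.pi_pos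
  have hchain : Real.sqrt π / (2*(k:ℝ)) ≤ C * (((2:ℝ)^k)⁻¹ * ((k:ℝ)^2)⁻¹ * 2 * Real.sqrt π) :=
    le_trans h1 h2
  set P : ℝ := (2:ℝ)^k with hPdef
  have hpk : (1:ℝ) ≤ P := one_le_pow₀ (by norm_num)
  have hpk0 : (0:ℝ) < P := by positivity
  set s : ℝ := Real.sqrt π with hsdef
  have heq : C * (P⁻¹ * ((k:ℝ)^2)⁻¹ * 2 * s) = 2*C*s/(P*(k:ℝ)^2) := by
    field_simp
  rw [heq] at hchain
  rw [div_le_div_iff₀ (by positivity) (by positivity)] at hchain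
  -- hchain : s * (P * k^2) ≤ 2*C*s * (2*k)
  have hfin : P * (k:ℝ) ≤ 4*C := by
    nlinarith [mul_pos hsp hkpos]
  nlinarith
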